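/- arXiv:2102.09080 — 7 statements merged into one kernel-verified Lean document; each statement's English description precedes it below -/
import Mathlib

section
/- The knockoff matrix satisfies X̃ᵀX = Σ − D; that is, the inner products between each knockoff column and each original column reproduce those of the original design except that the diagonal is reduced by the vector s. -/
open Matrix

theorem knockoff_cross_gram
    {n d : ℕ} (hd : 1 ≤ d) (hnd : 2 * d ≤ n)
    (X : Matrix (Fin n) (Fin d) ℝ) (hrank : X.rank = d)
    (hSg : (Xᵀ * X).PosDef)
    (s : Fin d → ℝ) (hs : ∀ j, 0 < s j)
    (hPD : ((2 : ℝ) • (Xᵀ * X) - Matrix.diagonal s).PosDef)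
    (U : Matrix (Fin n) (Fin d) ℝ) (hUU : Uᵀ * U = 1) (hXU : Xᵀ * U = 0)
    (C : Matrix (Fin d) (Fin d) ℝ) (hC : C.PosSemidef)
    (hCsq : C * C = (2 : ℝ) • Matrix.diagonal s
        - Matrix.diagonal s * (Xᵀ * X)⁻¹ * Matrix.diagonal s) :
    (X * (Xᵀ * X)⁻¹ * (Xᵀ * X - Matrix.diagonal s) + U * C)ᵀ * X
      = Xᵀ * X - Matrix.diagonal s := by
  have hsym : (Xᵀ * X)⁻¹ᵀ = (Xᵀ * X)⁻¹ := by
    rw [transpose_nonsing_inv, transpose_mul, transpose_transpose]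
  have hUX : Uᵀ * X = 0 := by
    have := congrArg transpose hXU
    simpa [transpose_mul] using this
  have hinv : (Xᵀ * X)⁻¹ * (Xᵀ * X) = 1 :=
    nonsing_inv_mul _ (isUnit_iff_ne_zero.mpr hSg.det_pos.ne')
  have hdsym : (Xᵀ * X - Matrix.diagonal s)ᵀ = Xᵀ * X - Matrix.diagonal s := by
    rw [transpose_sub, transpose_mul, transpose_transpose, diagonal_transpose]
  simp only [transpose_add, transpose_mul, hsym, hdsym, Matrix.add_mul,
    Matrix.mul_assoc, hUX, Matrix.mul_zero, add_zero, hinv, Matrix.mul_one]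
end

section
/- The knockoff matrix satisfies X̃ᵀX̃ = Σ; that is, the knockoff columns have exactly the same Gram matrix as the original design matrix. -/
open Matrix

theorem knockoff_gram
    {n d : ℕ} (hd : 1 ≤ d) (hnd : 2 * d ≤ n)
    (X : Matrix (Fin n) (Fin d) ℝ) (hrank : X.rank = d)
    (hSg : (Xᵀ * X).PosDef)
    (s : Fin d → ℝ) (hs : ∀ j, 0 < s j)
    (hPD : ((2 : ℝ) • (Xᵀ * X) - Matrix.diagonal s).PosDef)
    (U : Matrix (Fin n) (Fin d) ℝ) (hUU : Uᵀ * U = 1) (hXU : Xᵀ * U = 0)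
    (C : Matrix (Fin d) (Fin d) ℝ) (hC : C.PosSemidef)
    (hCsq : C * C = (2 : ℝ) • Matrix.diagonal s
        - Matrix.diagonal s * (Xᵀ * X)⁻¹ * Matrix.diagonal s) :
    (X * (Xᵀ * X)⁻¹ * (Xᵀ * X - Matrix.diagonal s) + U * C)ᵀ
        * (X * (Xᵀ * X)⁻¹ * (Xᵀ * X - Matrix.diagonal s) + U * C)
      = Xᵀ * X := by
  set S := Xᵀ * X with hS
  set D := Matrix.diagonal s with hD
  have hSsym : Sᵀ = S := hSg.isHermitian.eq
  have hdet : IsUnit S.det := isUnit_iff_ne_zero.mpr hSg.det_pos.ne'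
  have hinv : S⁻¹ * S = 1 := Matrix.nonsing_inv_mul S hdet
  have hinv' : S * S⁻¹ = 1 := Matrix.mul_nonsing_inv S hdet
  have hSinvSym : (S⁻¹)ᵀ = S⁻¹ := by
    rw [Matrix.transpose_nonsing_inv, hSsym]
  have hDsym : Dᵀ = D := Matrix.diagonal_transpose s
  have hCsym : Cᵀ = C := hC.isHermitian.eq
  have hUX : Uᵀ * X = 0 := by
    have := congrArg Matrix.transpose hXU
    simpa [Matrix.transpose_mul] using this
  have h2D : (2 : ℝ) • D = D + D := two_smul ℝ D
  rw [h2D] at hCsq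
  have e2 : S * S⁻¹ * D = D := by rw [hinv', Matrix.one_mul]
  have e3 : D * S⁻¹ * S = D := by rw [Matrix.mul_assoc, hinv, Matrix.mul_one]
  have key : (S - D) * S⁻¹ * (S - D) = S - (D + D) + D * S⁻¹ * D := by
    rw [Matrix.sub_mul, Matrix.sub_mul, Matrix.mul_sub, Matrix.mul_sub, hinv',
      Matrix.one_mul, Matrix.one_mul, e3]
    abel
  rw [Matrix.transpose_add, Matrix.transpose_mul, Matrix.transpose_mul,
    Matrix.transpose_mul, Matrix.transpose_sub, hSsym, hSinvSym, hDsym, hCsym,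
    Matrix.add_mul, Matrix.mul_add, Matrix.mul_add]
  have h1 : (S - D) * (S⁻¹ * Xᵀ) * (X * S⁻¹ * (S - D)) = S - (D + D) + D * S⁻¹ * D := by
    calc (S - D) * (S⁻¹ * Xᵀ) * (X * S⁻¹ * (S - D))
        = (S - D) * S⁻¹ * (Xᵀ * X * (S⁻¹ * (S - D))) := by
          simp only [Matrix.mul_assoc]
      _ = (S - D) * S⁻¹ * (S - D) := by
          rw [← hS, ← Matrix.mul_assoc S S⁻¹, hinv', Matrix.one_mul]
      _ = S - (D + D) + D * S⁻¹ * D := key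
  have h2 : (S - D) * (S⁻¹ * Xᵀ) * (U * C) = 0 := by
    simp only [Matrix.mul_assoc]
    rw [← Matrix.mul_assoc Xᵀ U C, hXU, Matrix.zero_mul, Matrix.mul_zero, Matrix.mul_zero]
  have h3 : C * Uᵀ * (X * S⁻¹ * (S - D)) = 0 := by
    simp only [Matrix.mul_assoc]
    rw [← Matrix.mul_assoc Uᵀ X _, hUX, Matrix.zero_mul, Matrix.mul_zero]
  have h4 : C * Uᵀ * (U * C) = D + D - D * S⁻¹ * D := by
    rw [Matrix.mul_assoc, ← Matrix.mul_assoc Uᵀ U C, hUU, Matrix.one_mul, hCsq]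
  rw [h1, h2, h3, h4]
  abel
end

section
/- For a symmetric positive definite matrix Σ ∈ ℝ^{d×d} and a diagonal matrix D = diag(s) with strictly positive diagonal entries, the matrix 2Σ − D is positive definite if and only if the matrix 2D − DΣ⁻¹D is positive definite. -/
open Matrix

private lemma posDef_smul' {n : Type*} [Fintype n] {M : Matrix n n ℝ}
    (hM : M.PosDef) {c : ℝ} (hc : 0 < c) : (c • M).PosDef := by
  refine posDef_iff_dotProduct_mulVec.mpr ⟨?_, fun x hx => ?_⟩
  · unfold Matrix.IsHermitian
    rw [conjTranspose_smul, hM.1]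
    simp
  · have h := hM.dotProduct_mulVec_pos hx
    have : (c • M) *ᵥ x = c • (M *ᵥ x) := smul_mulVec c M x
    rw [this, dotProduct_smul]
    exact mul_pos hc h

private lemma posDef_smul_iff' {n : Type*} [Fintype n] {M : Matrix n n ℝ}
    {c : ℝ} (hc : 0 < c) : (c • M).PosDef ↔ M.PosDef := by
  constructor
  · intro h
    have := posDef_smul' h (inv_pos.2 hc)
    rwa [smul_smul, inv_mul_cancel₀ hc.ne', one_smul] at this
  · exact fun h => posDef_smul' h hc

private lemma posDef_of_posSemidef_det_ne_zero {n : Type*} [Fintype n] [DecidableEq n]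
    {M : Matrix n n ℝ} (h : M.PosSemidef) (hdet : M.det ≠ 0) : M.PosDef := by
  refine posDef_iff_dotProduct_mulVec.mpr ⟨h.1, fun x hx => ?_⟩
  rcases lt_or_eq_of_le (h.dotProduct_mulVec_nonneg x) with h' | h'
  · exact h'
  · exfalso
    have hMx : M *ᵥ x = 0 := (h.dotProduct_mulVec_zero_iff x).mp h'.symm
    have : x = 0 := by
      have := congrArg (fun v => M⁻¹ *ᵥ v) hMx
      simpa [Matrix.mulVec_mulVec, Matrix.nonsing_inv_mul M (isUnit_iff_ne_zero.2 hdet)]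
        using this
    exact hx this

theorem posDef_two_sigma_sub_D_iff
    {d : ℕ} (Sg : Matrix (Fin d) (Fin d) ℝ) (hSg : Sg.PosDef)
    (s : Fin d → ℝ) (hs : ∀ j, 0 < s j) :
    ((2 : ℝ) • Sg - Matrix.diagonal s).PosDef ↔
      ((2 : ℝ) • Matrix.diagonal s
        - Matrix.diagonal s * Sg⁻¹ * Matrix.diagonal s).PosDef := by
  set A : Matrix (Fin d) (Fin d) ℝ := (2 : ℝ) • Sg with hA_def
  set Dm : Matrix (Fin d) (Fin d) ℝ := Matrix.diagonal s with hDm_def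
  have hA : A.PosDef := posDef_smul' hSg two_pos
  have hD : Dm.PosDef := posDef_diagonal_iff.2 hs
  haveI iA : Invertible A := hA.isUnit.invertible
  haveI iD : Invertible Dm := hD.isUnit.invertible
  have hDH : Dmᴴ = Dm := by
    simp [hDm_def, Matrix.diagonal_conjTranspose]
  have hDDD : Dm * Dm⁻¹ * Dm = Dm := by
    rw [Matrix.mul_nonsing_inv _ hD.det_pos.ne'.isUnit, Matrix.one_mul]
  -- Schur complement equivalences
  have key1 : (Matrix.fromBlocks A Dm Dm Dm).PosSemidef ↔ (Dm - Dm * A⁻¹ * Dm).PosSemidef := by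
    have := Matrix.PosDef.fromBlocks₁₁ (A := A) Dm Dm hA
    rwa [hDH] at this
  have key2 : (Matrix.fromBlocks A Dm Dm Dm).PosSemidef ↔ (A - Dm).PosSemidef := by
    have := Matrix.PosDef.fromBlocks₂₂ (D := Dm) A Dm hD
    rwa [hDH, hDDD] at this
  -- determinant identities
  have det2 : (Matrix.fromBlocks A Dm Dm Dm).det = Dm.det * (A - Dm).det := by
    rw [Matrix.det_fromBlocks₂₂, invOf_eq_nonsing_inv, hDDD]
  have det1 : (Matrix.fromBlocks A Dm Dm Dm).det = A.det * (Dm - Dm * A⁻¹ * Dm).det := by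
    rw [Matrix.det_fromBlocks₁₁, invOf_eq_nonsing_inv]
  have main : (A - Dm).PosDef ↔ (Dm - Dm * A⁻¹ * Dm).PosDef := by
    constructor
    · intro h
      refine posDef_of_posSemidef_det_ne_zero (key1.mp (key2.mpr h.posSemidef)) ?_
      intro hz
      have : (Matrix.fromBlocks A Dm Dm Dm).det = 0 := by rw [det1, hz, mul_zero]
      rw [det2] at this
      rcases mul_eq_zero.mp this with h' | h'
      · exact hD.det_pos.ne' h'
      · exact h.det_pos.ne' h'
    · intro h
      refine posDef_of_posSemidef_det_ne_zero (key2.mp (key1.mpr h.posSemidef)) ?_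
      intro hz
      have : (Matrix.fromBlocks A Dm Dm Dm).det = 0 := by rw [det2, hz, mul_zero]
      rw [det1] at this
      rcases mul_eq_zero.mp this with h' | h'
      · exact hA.det_pos.ne' h'
      · exact h.det_pos.ne' h'
  -- rewrite the RHS
  have hAinv : A⁻¹ = (2 : ℝ)⁻¹ • Sg⁻¹ := by
    haveI : Invertible (2 : ℝ) := invertibleOfNonzero two_ne_zero
    rw [hA_def, Matrix.inv_smul (A := Sg) (2:ℝ) hSg.det_pos.ne'.isUnit, invOf_eq_inv]
  have hRHS : (2 : ℝ) • Dm - Dm * Sg⁻¹ * Dm = (2 : ℝ) • (Dm - Dm * A⁻¹ * Dm) := by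
    rw [hAinv, Matrix.mul_smul, Matrix.smul_mul, smul_sub, smul_smul]
    norm_num
  rw [hA_def] at main
  rw [hRHS, posDef_smul_iff' (two_pos)]
  exact main
end

section
/- The matrices X + X̃ and X − X̃ have orthogonal column spaces: (X + X̃)ᵀ(X − X̃) = 0. -/
open Matrix

theorem knockoff_sum_diff_orthogonal
    {n d : ℕ} (hd : 1 ≤ d) (hnd : 2 * d ≤ n)
    (X : Matrix (Fin n) (Fin d) ℝ) (hrank : X.rank = d)
    (hSg : (Xᵀ * X).PosDef)
    (s : Fin d → ℝ) (hs : ∀ j, 0 < s j)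
    (hPD : ((2 : ℝ) • (Xᵀ * X) - Matrix.diagonal s).PosDef)
    (U : Matrix (Fin n) (Fin d) ℝ) (hUU : Uᵀ * U = 1) (hXU : Xᵀ * U = 0)
    (C : Matrix (Fin d) (Fin d) ℝ) (hC : C.PosSemidef)
    (hCsq : C * C = (2 : ℝ) • Matrix.diagonal s
        - Matrix.diagonal s * (Xᵀ * X)⁻¹ * Matrix.diagonal s) :
    (X + (X * (Xᵀ * X)⁻¹ * (Xᵀ * X - Matrix.diagonal s) + U * C))ᵀ
        * (X - (X * (Xᵀ * X)⁻¹ * (Xᵀ * X - Matrix.diagonal s) + U * C))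
      = 0 := by
  have hdet : IsUnit (Xᵀ * X).det := isUnit_iff_ne_zero.mpr (ne_of_gt hSg.det_pos)
  have h1 : (Xᵀ * X) * (Xᵀ * X)⁻¹ = 1 := Matrix.mul_nonsing_inv _ hdet
  have h2 : (Xᵀ * X)⁻¹ * (Xᵀ * X) = 1 := Matrix.nonsing_inv_mul _ hdet
  have hSt : (Xᵀ * X)ᵀ = Xᵀ * X := by
    rw [Matrix.transpose_mul, Matrix.transpose_transpose]
  have hAt : ((Xᵀ * X)⁻¹)ᵀ = (Xᵀ * X)⁻¹ := by
    rw [Matrix.transpose_nonsing_inv, hSt]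
  have hDt : (Matrix.diagonal s)ᵀ = Matrix.diagonal s := Matrix.diagonal_transpose s
  have hUX : Uᵀ * X = 0 := by
    have := congrArg Matrix.transpose hXU
    simpa [Matrix.transpose_mul] using this
  have hCt : Cᵀ = C := by
    have := hC.1
    simpa [Matrix.IsHermitian] using this
  set S := Xᵀ * X with hS
  set D := Matrix.diagonal s with hD
  set A := S⁻¹ with hA
  set Y := X * A * (S - D) + U * C with hY
  have hXY : Xᵀ * Y = S - D := by
    rw [hY, Matrix.mul_add]
    simp only [← Matrix.mul_assoc]
    rw [← hS, h1, Matrix.one_mul, hXU, Matrix.zero_mul, add_zero]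
  have hYt : Yᵀ = (S - D) * A * Xᵀ + C * Uᵀ := by
    rw [hY, Matrix.transpose_add, Matrix.transpose_mul, Matrix.transpose_mul,
      Matrix.transpose_mul, Matrix.transpose_sub, hSt, hDt, hAt, hCt, Matrix.mul_assoc]
  have hYX : Yᵀ * X = S - D := by
    rw [hYt, Matrix.add_mul, Matrix.mul_assoc ((S - D) * A) Xᵀ X, ← hS,
      Matrix.mul_assoc (S - D) A S, h2, Matrix.mul_one,
      Matrix.mul_assoc C Uᵀ X, hUX, Matrix.mul_zero, add_zero]
  have hYY : Yᵀ * Y = S := by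
    rw [hYt, hY, Matrix.add_mul, Matrix.mul_add, Matrix.mul_add]
    have e1 : (S - D) * A * Xᵀ * (X * A * (S - D)) = (S - D) * A * (S - D) := by
      simp only [← Matrix.mul_assoc]
      rw [Matrix.mul_assoc ((S - D) * A) Xᵀ X, ← hS, Matrix.mul_assoc (S - D) A S, h2,
        Matrix.mul_one]
    have e2 : (S - D) * A * Xᵀ * (U * C) = 0 := by
      rw [Matrix.mul_assoc ((S - D) * A) Xᵀ, ← Matrix.mul_assoc Xᵀ U, hXU,
        Matrix.zero_mul, Matrix.mul_zero]
    have e3 : C * Uᵀ * (X * A * (S - D)) = 0 := by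
      rw [Matrix.mul_assoc C Uᵀ, Matrix.mul_assoc X A, ← Matrix.mul_assoc Uᵀ X, hUX,
        Matrix.zero_mul, Matrix.mul_zero]
    have e4 : C * Uᵀ * (U * C) = C * C := by
      rw [Matrix.mul_assoc C Uᵀ, ← Matrix.mul_assoc Uᵀ U, hUU, Matrix.one_mul]
    rw [e1, e2, e3, e4, hCsq]
    have e5 : (S - D) * A * (S - D)
        = S - D - D + D * A * D := by
      rw [Matrix.sub_mul, Matrix.sub_mul, Matrix.mul_sub, Matrix.mul_sub, h1,
        Matrix.one_mul, Matrix.one_mul, Matrix.mul_assoc D A S, h2, Matrix.mul_one]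
      abel
    rw [e5, two_smul ℝ D]
    abel
  rw [Matrix.transpose_add, Matrix.add_mul, Matrix.mul_sub, Matrix.mul_sub,
    hXY, hYX, hYY]
  abel
end

section
/- The Gram matrix of the difference of the design and its knockoff is (X − X̃)ᵀ(X − X̃) = 2D. -/
open Matrix

theorem knockoff_diff_gram
    {n d : ℕ} (hd : 1 ≤ d) (hnd : 2 * d ≤ n)
    (X : Matrix (Fin n) (Fin d) ℝ) (hrank : X.rank = d)
    (hSg : (Xᵀ * X).PosDef)
    (s : Fin d → ℝ) (hs : ∀ j, 0 < s j)
    (hPD : ((2 : ℝ) • (Xᵀ * X) - Matrix.diagonal s).PosDef)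
    (U : Matrix (Fin n) (Fin d) ℝ) (hUU : Uᵀ * U = 1) (hXU : Xᵀ * U = 0)
    (C : Matrix (Fin d) (Fin d) ℝ) (hC : C.PosSemidef)
    (hCsq : C * C = (2 : ℝ) • Matrix.diagonal s
        - Matrix.diagonal s * (Xᵀ * X)⁻¹ * Matrix.diagonal s) :
    (X - (X * (Xᵀ * X)⁻¹ * (Xᵀ * X - Matrix.diagonal s) + U * C))ᵀ
        * (X - (X * (Xᵀ * X)⁻¹ * (Xᵀ * X - Matrix.diagonal s) + U * C))
      = (2 : ℝ) • Matrix.diagonal s := by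
  have hdet : IsUnit (Xᵀ * X).det := isUnit_iff_ne_zero.mpr hSg.det_pos.ne'
  have hinv : (Xᵀ * X)⁻¹ * (Xᵀ * X) = 1 := Matrix.nonsing_inv_mul _ hdet
  have hIsym : (Xᵀ * X)⁻¹ᵀ = (Xᵀ * X)⁻¹ := by
    rw [Matrix.transpose_nonsing_inv, Matrix.transpose_mul, Matrix.transpose_transpose]
  have hUX : Uᵀ * X = 0 := by
    have := congrArg Matrix.transpose hXU
    simpa [Matrix.transpose_mul] using this
  have hCT : Cᵀ = C := hC.1
  have h1 : X - (X * (Xᵀ * X)⁻¹ * (Xᵀ * X - Matrix.diagonal s) + U * C)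
      = X * (Xᵀ * X)⁻¹ * Matrix.diagonal s - U * C := by
    have h : X * (Xᵀ * X)⁻¹ * (Xᵀ * X - Matrix.diagonal s)
        = X - X * (Xᵀ * X)⁻¹ * Matrix.diagonal s := by
      rw [Matrix.mul_sub, Matrix.mul_assoc, hinv, Matrix.mul_one]
    rw [h]; abel
  have e1 : Matrix.diagonal s * ((Xᵀ * X)⁻¹ * (Xᵀ * (X * ((Xᵀ * X)⁻¹ * Matrix.diagonal s))))
      = Matrix.diagonal s * ((Xᵀ * X)⁻¹ * Matrix.diagonal s) := by
    rw [← Matrix.mul_assoc Xᵀ X _, ← Matrix.mul_assoc _ (Xᵀ * X) _, hinv, Matrix.one_mul]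
  have e2 : Matrix.diagonal s * ((Xᵀ * X)⁻¹ * (Xᵀ * (U * C))) = 0 := by
    rw [← Matrix.mul_assoc Xᵀ U C, hXU, Matrix.zero_mul, Matrix.mul_zero, Matrix.mul_zero]
  have e3 : C * (Uᵀ * (X * ((Xᵀ * X)⁻¹ * Matrix.diagonal s))) = 0 := by
    rw [← Matrix.mul_assoc Uᵀ X _, hUX, Matrix.zero_mul, Matrix.mul_zero]
  have e4 : C * (Uᵀ * (U * C)) = C * C := by
    rw [← Matrix.mul_assoc Uᵀ U C, hUU, Matrix.one_mul]
  rw [h1, Matrix.transpose_sub, Matrix.transpose_mul, Matrix.transpose_mul,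
    Matrix.transpose_mul, hIsym, hCT, Matrix.diagonal_transpose]
  simp only [Matrix.sub_mul, Matrix.mul_sub, Matrix.mul_assoc]
  rw [e1, e2, e3, e4, hCsq]
  simp only [Matrix.mul_assoc]
  abel
end

section
/- For every vector Y ∈ ℝ^n, the first knockoff-based estimator decomposes around the ordinary least squares estimator: (2Σ − D)⁻¹(X + X̃)ᵀY = Σ⁻¹XᵀY + (2Σ − D)⁻¹(2D − DΣ⁻¹D)^{1/2}ŨᵀY. -/
open Matrix

theorem knockoff_estimator_one_decomposition
    {n d : ℕ} (hd : 1 ≤ d) (hnd : 2 * d ≤ n)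
    (X : Matrix (Fin n) (Fin d) ℝ) (hrank : X.rank = d)
    (hSg : (Xᵀ * X).PosDef)
    (s : Fin d → ℝ) (hs : ∀ j, 0 < s j)
    (hPD : ((2 : ℝ) • (Xᵀ * X) - Matrix.diagonal s).PosDef)
    (U : Matrix (Fin n) (Fin d) ℝ) (hUU : Uᵀ * U = 1) (hXU : Xᵀ * U = 0)
    (C : Matrix (Fin d) (Fin d) ℝ) (hC : C.PosSemidef)
    (hCsq : C * C = (2 : ℝ) • Matrix.diagonal s
        - Matrix.diagonal s * (Xᵀ * X)⁻¹ * Matrix.diagonal s) :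
    ∀ Y : Fin n → ℝ,
      ((2 : ℝ) • (Xᵀ * X) - Matrix.diagonal s)⁻¹ *ᵥ
          ((X + (X * (Xᵀ * X)⁻¹ * (Xᵀ * X - Matrix.diagonal s) + U * C))ᵀ *ᵥ Y)
        = (Xᵀ * X)⁻¹ *ᵥ (Xᵀ *ᵥ Y)
          + ((2 : ℝ) • (Xᵀ * X) - Matrix.diagonal s)⁻¹ *ᵥ (C *ᵥ (Uᵀ *ᵥ Y)) := by
  intro Y
  set S := Xᵀ * X with hSdef
  set D := Matrix.diagonal s with hDdef
  set A := (2 : ℝ) • S - D with hAdef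
  have hSdet : IsUnit S.det := isUnit_iff_ne_zero.mpr hSg.det_pos.ne'
  have hAdet : IsUnit A.det := isUnit_iff_ne_zero.mpr hPD.det_pos.ne'
  have hSsymm : Sᵀ = S := by
    rw [hSdef, transpose_mul, transpose_transpose]
  have hSinvsymm : (S⁻¹)ᵀ = S⁻¹ := by
    rw [transpose_nonsing_inv, hSsymm]
  have hCsymm : Cᵀ = C := by
    have := hC.1
    simpa [Matrix.IsHermitian] using this
  have hmul : S * S⁻¹ = 1 := mul_nonsing_inv _ hSdet
  have hAinv : A⁻¹ * A = 1 := nonsing_inv_mul _ hAdet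
  have key : A⁻¹ * (X + (X * S⁻¹ * (S - D) + U * C))ᵀ
      = S⁻¹ * Xᵀ + A⁻¹ * (C * Uᵀ) := by
    have hT : (X + (X * S⁻¹ * (S - D) + U * C))ᵀ
        = Xᵀ + ((S - D) * (S⁻¹ * Xᵀ) + C * Uᵀ) := by
      simp only [transpose_add, transpose_mul, transpose_sub, hSsymm,
        hSinvsymm, hCsymm]
      rw [hDdef, Matrix.diagonal_transpose]
    have hfold : Xᵀ + (S - D) * (S⁻¹ * Xᵀ) = A * (S⁻¹ * Xᵀ) := by
      rw [hAdef, Matrix.sub_mul, Matrix.sub_mul, Matrix.smul_mul,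
        ← Matrix.mul_assoc, hmul, Matrix.one_mul, two_smul]
      abel
    rw [hT, ← add_assoc, Matrix.mul_add, hfold, ← Matrix.mul_assoc,
      hAinv, Matrix.one_mul]
  calc A⁻¹ *ᵥ ((X + (X * S⁻¹ * (S - D) + U * C))ᵀ *ᵥ Y)
      = (A⁻¹ * (X + (X * S⁻¹ * (S - D) + U * C))ᵀ) *ᵥ Y := by
        rw [mulVec_mulVec]
    _ = (S⁻¹ * Xᵀ + A⁻¹ * (C * Uᵀ)) *ᵥ Y := by rw [key]
    _ = S⁻¹ *ᵥ (Xᵀ *ᵥ Y) + A⁻¹ *ᵥ (C *ᵥ (Uᵀ *ᵥ Y)) := by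
        rw [add_mulVec, mulVec_mulVec, mulVec_mulVec, mulVec_mulVec,
          Matrix.mul_assoc]
end

section
/- Under the Gaussian linear model, the estimator β̂₂ = D⁻¹(X − X̃)ᵀY has the multivariate Gaussian distribution N_d(β, 2τ²D⁻¹); that is, the law of β̂₂ is the multivariate Gaussian measure on ℝ^d with mean β and covariance matrix 2τ²D⁻¹ (a diagonal covariance matrix, so the components of β̂₂ are uncorrelated). -/
open Matrix MeasureTheory ProbabilityTheory

/-- A measure on `ℝ^d` is the multivariate Gaussian with mean `m` and covariance
matrix `C` iff every one-dimensional linear projection is a real Gaussian with the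
corresponding mean and variance (Cramér–Wold characterization). -/
def IsMultivariateGaussian {d : ℕ} (ν : Measure (Fin d → ℝ))
    (m : Fin d → ℝ) (C : Matrix (Fin d) (Fin d) ℝ) : Prop :=
  ∀ l : Fin d → ℝ,
    ν.map (fun x => l ⬝ᵥ x) = gaussianReal (l ⬝ᵥ m) (l ⬝ᵥ (C *ᵥ l)).toNNReal

section Aux

open Real
open scoped NNReal ENNReal

lemma gaussianPDFReal_conv (v1 v2 : ℝ≥0) (h1 : v1 ≠ 0) (h2 : v2 ≠ 0) (z : ℝ) :
    ∫ x, gaussianPDFReal 0 v1 x * gaussianPDFReal x v2 z = gaussianPDFReal 0 (v1 + v2) z := by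
  have hV1 : (0:ℝ) < v1 := NNReal.coe_pos.mpr (pos_iff_ne_zero.mpr h1)
  have hV2 : (0:ℝ) < v2 := NNReal.coe_pos.mpr (pos_iff_ne_zero.mpr h2)
  have hV12 : (0:ℝ) < (v1:ℝ) + v2 := by linarith
  set V1 := (v1:ℝ)
  set V2 := (v2:ℝ)
  set a : ℝ := z * V1 / (V1 + V2) with ha
  set b : ℝ := (V1 + V2) / (2 * V1 * V2) with hb
  have hbpos : 0 < b := by positivity
  have key : ∀ x : ℝ, gaussianPDFReal 0 v1 x * gaussianPDFReal x v2 z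
      = ((√(2 * π * V1))⁻¹ * (√(2 * π * V2))⁻¹ * rexp (- z^2 / (2 * (V1 + V2))))
        * rexp (- b * (x - a)^2) := by
    intro x
    simp only [gaussianPDFReal]
    have hexp : rexp (-(x - 0)^2/(2*V1) + -(z-x)^2/(2*V2))
        = rexp (- z^2 / (2 * (V1 + V2))) * rexp (- b * (x - a)^2) := by
      rw [← Real.exp_add]
      congr 1
      rw [ha, hb]
      field_simp
      ring
    rw [mul_mul_mul_comm, ← Real.exp_add, hexp]
    ring
  rw [integral_congr_ae (Filter.Eventually.of_forall key), integral_const_mul,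
    integral_sub_right_eq_self (fun x => rexp (- b * x^2)) a, integral_gaussian]
  have hconst : (√(2 * π * V1))⁻¹ * (√(2 * π * V2))⁻¹ * √(π / b)
      = (√(2 * π * (V1 + V2)))⁻¹ := by
    have heq : √(2 * π * V1) * √(2 * π * V2) = √(2 * π * (V1 + V2)) * √(π / b) := by
      rw [← Real.sqrt_mul (by positivity), ← Real.sqrt_mul (by positivity)]
      congr 1
      rw [hb]
      field_simp
    have hsb : (0:ℝ) < √(π / b) := Real.sqrt_pos.mpr (by positivity)
    rw [← mul_inv, heq, mul_inv, mul_assoc, inv_mul_cancel₀ hsb.ne', mul_one]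
  have hre : (√(2 * π * V1))⁻¹ * (√(2 * π * V2))⁻¹ * rexp (- z^2 / (2 * (V1 + V2))) * √(π / b)
      = ((√(2 * π * V1))⁻¹ * (√(2 * π * V2))⁻¹ * √(π / b)) * rexp (- z^2 / (2 * (V1 + V2))) := by
    ring
  rw [hre, hconst]
  simp only [gaussianPDFReal]
  push_cast
  ring_nf
  rfl

lemma gaussianPDFReal_le (μ : ℝ) (v : ℝ≥0) (x : ℝ) :
    gaussianPDFReal μ v x ≤ (√(2 * π * v))⁻¹ := by
  rw [gaussianPDFReal]
  have h1 : rexp (- (x - μ)^2 / (2 * v)) ≤ 1 := by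
    rw [Real.exp_le_one_iff]
    rcases eq_or_ne v 0 with h | h
    · simp [h]
    · have : (0:ℝ) < v := NNReal.coe_pos.mpr (pos_iff_ne_zero.mpr h)
      have h2 := sq_nonneg (x - μ)
      apply div_nonpos_of_nonpos_of_nonneg <;> [linarith; positivity]
  calc (√(2 * π * v))⁻¹ * rexp (- (x - μ)^2 / (2 * v)) ≤ (√(2 * π * v))⁻¹ * 1 := by
        gcongr
    _ = (√(2 * π * v))⁻¹ := mul_one _

lemma gaussianReal_conv (v1 v2 : ℝ≥0) :
    Measure.map (fun p : ℝ × ℝ => p.1 + p.2)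
      ((gaussianReal 0 v1).prod (gaussianReal 0 v2)) = gaussianReal 0 (v1 + v2) := by
  rcases eq_or_ne v1 0 with h1 | h1
  · rw [h1, gaussianReal_zero_var, Measure.dirac_prod, Measure.map_map measurable_add
      measurable_prodMk_left]
    have : ((fun p : ℝ × ℝ => p.1 + p.2) ∘ Prod.mk (0:ℝ)) = id := by
      funext y; simp
    rw [this, Measure.map_id, zero_add]
  rcases eq_or_ne v2 0 with h2 | h2
  · rw [h2, gaussianReal_zero_var, Measure.prod_dirac, Measure.map_map measurable_add
      measurable_prodMk_right]
    have : ((fun p : ℝ × ℝ => p.1 + p.2) ∘ (fun x : ℝ => (x, (0:ℝ)))) = id := by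
      funext y; simp
    rw [this, Measure.map_id, add_zero]
  have h12 : v1 + v2 ≠ 0 := by simp [h1, h2]
  -- joint measurability of the two-parameter pdf
  have hcont : Measurable (fun p : ℝ × ℝ => gaussianPDF p.1 v2 p.2) := by
    apply Measurable.ennreal_ofReal
    simp only [gaussianPDFReal]
    fun_prop
  ext s hs
  rw [Measure.map_apply measurable_add hs, Measure.prod_apply (measurable_add hs)]
  have hpt : ∀ x : ℝ, gaussianReal 0 v2 (Prod.mk x ⁻¹' ((fun p : ℝ × ℝ => p.1 + p.2) ⁻¹' s))
      = gaussianReal x v2 s := by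
    intro x
    have : Prod.mk x ⁻¹' ((fun p : ℝ × ℝ => p.1 + p.2) ⁻¹' s) = (fun y => x + y) ⁻¹' s := rfl
    rw [this, ← Measure.map_apply (measurable_const_add x) hs, gaussianReal_map_const_add,
      zero_add]
  simp_rw [hpt]
  have hpt2 : ∀ x : ℝ, gaussianReal x v2 s = ∫⁻ z in s, gaussianPDF x v2 z :=
    fun x => gaussianReal_apply x h2 s
  simp_rw [hpt2]
  rw [gaussianReal_of_var_ne_zero _ h1,
    lintegral_withDensity_eq_lintegral_mul _ (measurable_gaussianPDF 0 v1)
      (Measurable.lintegral_prod_right (f := fun x z => gaussianPDF x v2 z) hcont)]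
  have hmul : ∀ x : ℝ, gaussianPDF 0 v1 x * ∫⁻ z in s, gaussianPDF x v2 z
      = ∫⁻ z in s, gaussianPDF 0 v1 x * gaussianPDF x v2 z := by
    intro x
    exact (lintegral_const_mul' _ _ ENNReal.ofReal_ne_top).symm
  rw [show (gaussianPDF 0 v1 * fun x => ∫⁻ (y : ℝ) in s, (fun x z => gaussianPDF x v2 z) x y)
    = fun x => ∫⁻ z in s, gaussianPDF 0 v1 x * gaussianPDF x v2 z from funext hmul]
  rw [lintegral_lintegral_swap (by
    apply Measurable.aemeasurable
    exact ((measurable_gaussianPDF 0 v1).comp measurable_fst).mul hcont)]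
  have hinner : ∀ z : ℝ, ∫⁻ x, gaussianPDF 0 v1 x * gaussianPDF x v2 z
      = gaussianPDF 0 (v1 + v2) z := by
    intro z
    have hmeas : AEStronglyMeasurable
        (fun x => gaussianPDFReal 0 v1 x * gaussianPDFReal x v2 z) volume := by
      apply Continuous.aestronglyMeasurable
      simp only [gaussianPDFReal]
      fun_prop
    have hint : Integrable (fun x => gaussianPDFReal 0 v1 x * gaussianPDFReal x v2 z) := by
      refine Integrable.mono ((integrable_gaussianPDFReal 0 v1).const_mul
        ((√(2 * π * v2))⁻¹)) hmeas (ae_of_all _ fun x => ?_)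
      have h0 : 0 ≤ gaussianPDFReal 0 v1 x := gaussianPDFReal_nonneg _ _ _
      have h0' : 0 ≤ gaussianPDFReal x v2 z := gaussianPDFReal_nonneg _ _ _
      have hle : gaussianPDFReal x v2 z ≤ (√(2 * π * v2))⁻¹ := gaussianPDFReal_le _ _ _
      rw [Real.norm_eq_abs, Real.norm_eq_abs, abs_of_nonneg (by positivity),
        abs_of_nonneg (by positivity)]
      calc gaussianPDFReal 0 v1 x * gaussianPDFReal x v2 z
          ≤ gaussianPDFReal 0 v1 x * (√(2 * π * v2))⁻¹ := by gcongr
        _ = (√(2 * π * v2))⁻¹ * gaussianPDFReal 0 v1 x := mul_comm _ _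
    simp only [gaussianPDF]
    rw [lintegral_congr (fun x => (ENNReal.ofReal_mul (gaussianPDFReal_nonneg 0 v1 x)).symm),
      ← ofReal_integral_eq_lintegral_ofReal hint (ae_of_all _ fun x =>
        mul_nonneg (gaussianPDFReal_nonneg _ _ _) (gaussianPDFReal_nonneg _ _ _)),
      gaussianPDFReal_conv v1 v2 h1 h2 z]
  simp_rw [hinner]
  exact (gaussianReal_apply 0 h12 s).symm

lemma map_dotProduct_pi_gaussian : ∀ (n : ℕ) (v : ℝ≥0) (w : Fin n → ℝ),
    (Measure.pi fun _ : Fin n => gaussianReal 0 v).map (fun x => w ⬝ᵥ x)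
      = gaussianReal 0 ((∑ i, (w i)^2).toNNReal * v) := by
  intro n
  induction n with
  | zero =>
    intro v w
    have : (fun x : Fin 0 → ℝ => w ⬝ᵥ x) = fun _ => (0:ℝ) := by
      funext x; simp [dotProduct]
    rw [this, Measure.map_const]
    simp
  | succ n ih =>
    intro v w
    have hmdot : ∀ (m : ℕ) (u : Fin m → ℝ), Measurable fun x : Fin m → ℝ => u ⬝ᵥ x := by
      intro m u
      simp only [dotProduct]
      exact Finset.measurable_sum _ fun i _ => (measurable_pi_apply i).const_mul _
    set e := MeasurableEquiv.piFinSuccAbove (fun _ : Fin (n+1) => ℝ) 0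
    have hmp := measurePreserving_piFinSuccAbove (fun _ : Fin (n+1) => gaussianReal 0 v) 0
    have hmap : (Measure.pi fun _ : Fin (n+1) => gaussianReal 0 v).map e
        = (gaussianReal 0 v).prod (Measure.pi fun _ : Fin n => gaussianReal 0 v) := hmp.map_eq
    have hcomp : (fun x : Fin (n+1) → ℝ => w ⬝ᵥ x)
        = (fun p : ℝ × ℝ => p.1 + p.2) ∘ (Prod.map (fun y : ℝ => w 0 * y)
            (fun x : Fin n → ℝ => (fun j => w (Fin.succ j)) ⬝ᵥ x)) ∘ e := by
      funext x
      simp [e, dotProduct, Fin.sum_univ_succ, MeasurableEquiv.piFinSuccAbove_apply,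
        Fin.succAbove, Prod.map, Fin.tail]
    rw [hcomp, ← Function.comp_assoc, ← Measure.map_map
        (measurable_add.comp ((measurable_const_mul (w 0)).prodMap (hmdot n _))) e.measurable,
      ← Measure.map_map measurable_add ((measurable_const_mul (w 0)).prodMap (hmdot n _)), hmap,
      ← Measure.map_prod_map _ _ (measurable_const_mul (w 0)) (hmdot n _),
      show ((fun y : ℝ => w 0 * y) = fun y => w 0 * y) from rfl]
    rw [show (Measure.map (fun y => w 0 * y) (gaussianReal 0 v)) = gaussianReal (w 0 * 0) (⟨(w 0)^2, sq_nonneg _⟩ * v) from gaussianReal_map_const_mul (w 0),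
      ih v (fun j => w (Fin.succ j)), mul_zero, gaussianReal_conv]
    congr 1
    rw [← NNReal.coe_inj]
    have c1 : ((∑ j : Fin n, (w (Fin.succ j))^2).toNNReal : ℝ) = ∑ j : Fin n, (w (Fin.succ j))^2 :=
      Real.coe_toNNReal _ (by positivity)
    have c2 : ((∑ i : Fin (n+1), (w i)^2).toNNReal : ℝ) = ∑ i : Fin (n+1), (w i)^2 :=
      Real.coe_toNNReal _ (by positivity)
    push_cast [c1, c2]
    rw [Fin.sum_univ_succ]
    show (w 0)^2 * (v:ℝ) + (∑ x : Fin n, w x.succ ^ 2) * (v:ℝ) = _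
    ring

lemma measurable_dotProduct_aux {m : ℕ} (u : Fin m → ℝ) :
    Measurable fun y : Fin m → ℝ => u ⬝ᵥ y := by
  simp only [dotProduct]
  exact Finset.measurable_sum _ fun j _ => (measurable_pi_apply j).const_mul _

end Aux

theorem betahat_two_is_gaussian
    {n d : ℕ} (hd : 1 ≤ d) (hnd : 2 * d ≤ n)
    (X : Matrix (Fin n) (Fin d) ℝ) (hrank : X.rank = d)
    (hSg : (Xᵀ * X).PosDef)
    (s : Fin d → ℝ) (hs : ∀ j, 0 < s j)
    (hPD : ((2 : ℝ) • (Xᵀ * X) - Matrix.diagonal s).PosDef)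
    (U : Matrix (Fin n) (Fin d) ℝ) (hUU : Uᵀ * U = 1) (hXU : Xᵀ * U = 0)
    (C : Matrix (Fin d) (Fin d) ℝ) (hC : C.PosSemidef)
    (hCsq : C * C = (2 : ℝ) • Matrix.diagonal s
        - Matrix.diagonal s * (Xᵀ * X)⁻¹ * Matrix.diagonal s)
    {Ω : Type*} [MeasurableSpace Ω] (μ : Measure Ω) [IsProbabilityMeasure μ]
    (β : Fin d → ℝ) (τ : ℝ) (hτ : 0 < τ)
    (ε : Ω → Fin n → ℝ) (hε : Measurable ε)
    (hεlaw : μ.map ε = Measure.pi fun _ : Fin n => gaussianReal 0 ⟨τ ^ 2, sq_nonneg τ⟩) :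
    IsMultivariateGaussian
      (μ.map fun ω =>
        (Matrix.diagonal s)⁻¹ *ᵥ
          ((X - (X * (Xᵀ * X)⁻¹ * (Xᵀ * X - Matrix.diagonal s) + U * C))ᵀ *ᵥ
            (X *ᵥ β + ε ω)))
      β
      ((2 * τ ^ 2) • (Matrix.diagonal s)⁻¹) := by
  set Sg := Xᵀ * X with hSgdef
  set D := Matrix.diagonal s with hDdef
  have hSu : IsUnit Sg.det := isUnit_iff_ne_zero.mpr hSg.det_pos.ne'
  have hDdet : D.det ≠ 0 := by
    rw [hDdef, Matrix.det_diagonal]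
    exact Finset.prod_ne_zero_iff.mpr fun j _ => (hs j).ne'
  have hDu : IsUnit D.det := isUnit_iff_ne_zero.mpr hDdet
  have hSt : Sgᵀ = Sg := by rw [hSgdef, Matrix.transpose_mul, Matrix.transpose_transpose]
  have hSit : (Sg⁻¹)ᵀ = Sg⁻¹ := by rw [Matrix.transpose_nonsing_inv, hSt]
  have hDt : Dᵀ = D := Matrix.diagonal_transpose s
  have hDit : (D⁻¹)ᵀ = D⁻¹ := by rw [Matrix.transpose_nonsing_inv, hDt]
  have hCt : Cᵀ = C := by
    have := hC.1
    simpa [Matrix.IsHermitian, Matrix.conjTranspose_eq_transpose_of_trivial] using this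
  have hUtX : Uᵀ * X = 0 := by
    have := congrArg Matrix.transpose hXU
    simpa [Matrix.transpose_mul] using this
  set M := X - (X * Sg⁻¹ * (Sg - D) + U * C) with hMdef
  have hSS : Sg⁻¹ * (Xᵀ * X) = 1 := by rw [← hSgdef]; exact Matrix.nonsing_inv_mul _ hSu
  have hSS' : Xᵀ * X * Sg⁻¹ = 1 := by rw [← hSgdef]; exact Matrix.mul_nonsing_inv _ hSu
  have hM : M = X * (Sg⁻¹ * D) - U * C := by
    rw [hMdef, Matrix.mul_sub, Matrix.mul_assoc X Sg⁻¹ Sg, Matrix.nonsing_inv_mul _ hSu,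
      Matrix.mul_one, Matrix.mul_assoc X Sg⁻¹ D]
    abel
  have hMT : Mᵀ = D * (Sg⁻¹ * Xᵀ) - C * Uᵀ := by
    rw [hM, Matrix.transpose_sub, Matrix.transpose_mul, Matrix.transpose_mul,
      Matrix.transpose_mul, hSit, hDt, hCt, Matrix.mul_assoc]
  have hMtX : Mᵀ * X = D := by
    rw [hMT, Matrix.sub_mul, Matrix.mul_assoc D (Sg⁻¹ * Xᵀ) X, Matrix.mul_assoc Sg⁻¹ Xᵀ X,
      hSS, Matrix.mul_one, Matrix.mul_assoc C Uᵀ X, hUtX, Matrix.mul_zero, sub_zero]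
  have hMtM : Mᵀ * M = (2:ℝ) • D := by
    rw [hMT, hM, Matrix.sub_mul, Matrix.mul_sub, Matrix.mul_sub]
    have t11 : D * (Sg⁻¹ * Xᵀ) * (X * (Sg⁻¹ * D)) = D * (Sg⁻¹ * D) := by
      rw [Matrix.mul_assoc D (Sg⁻¹ * Xᵀ) _, Matrix.mul_assoc Sg⁻¹ Xᵀ _,
        ← Matrix.mul_assoc Xᵀ X (Sg⁻¹ * D), ← Matrix.mul_assoc (Xᵀ * X) Sg⁻¹ D,
        hSS', Matrix.one_mul]
    have t12 : D * (Sg⁻¹ * Xᵀ) * (U * C) = 0 := by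
      rw [Matrix.mul_assoc D (Sg⁻¹ * Xᵀ) _, Matrix.mul_assoc Sg⁻¹ Xᵀ _,
        ← Matrix.mul_assoc Xᵀ U C, hXU, Matrix.zero_mul, Matrix.mul_zero, Matrix.mul_zero]
    have t21 : C * Uᵀ * (X * (Sg⁻¹ * D)) = 0 := by
      rw [Matrix.mul_assoc C Uᵀ _, ← Matrix.mul_assoc Uᵀ X _, hUtX, Matrix.zero_mul,
        Matrix.mul_zero]
    have t22 : C * Uᵀ * (U * C) = C * C := by
      rw [Matrix.mul_assoc C Uᵀ _, ← Matrix.mul_assoc Uᵀ U C, hUU, Matrix.one_mul]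
    have hCsq' : C * C = (2:ℝ) • D - D * (Sg⁻¹ * D) := by
      rw [hCsq, ← Matrix.mul_assoc]
    rw [t11, t12, t21, t22, hCsq']
    abel
  set A := D⁻¹ * Mᵀ with hAdef
  have hAX : A * X = 1 := by
    rw [hAdef, Matrix.mul_assoc, hMtX, Matrix.nonsing_inv_mul _ hDu]
  have hAAT : A * Aᵀ = (2:ℝ) • D⁻¹ := by
    rw [hAdef, Matrix.transpose_mul, hDit, Matrix.transpose_transpose, Matrix.mul_assoc,
      ← Matrix.mul_assoc Mᵀ M, hMtM, Matrix.smul_mul, Matrix.mul_smul,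
      ← Matrix.mul_assoc D⁻¹ D D⁻¹, Matrix.nonsing_inv_mul _ hDu, Matrix.one_mul]
  have hfun : (fun ω => D⁻¹ *ᵥ (Mᵀ *ᵥ (X *ᵥ β + ε ω))) = fun ω => β + A *ᵥ ε ω := by
    funext ω
    rw [Matrix.mulVec_mulVec, ← hAdef, Matrix.mulVec_add, Matrix.mulVec_mulVec, hAX,
      Matrix.one_mulVec]
  have hAmeas : Measurable (fun y : Fin n → ℝ => β + A *ᵥ y) := by
    refine measurable_pi_iff.mpr fun i => ?_
    simp only [Pi.add_apply, Matrix.mulVec, dotProduct]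
    exact measurable_const.add (Finset.measurable_sum _ fun j _ =>
      (measurable_pi_apply j).const_mul _)
  intro l
  set w : Fin n → ℝ := Aᵀ *ᵥ l with hwdef
  have hw2 : ∑ i, (w i)^2 = l ⬝ᵥ (((2:ℝ) • D⁻¹) *ᵥ l) := by
    have h1 : ∑ i, (w i)^2 = w ⬝ᵥ w := by simp [dotProduct, sq]
    rw [h1, hwdef, Matrix.dotProduct_mulVec (Aᵀ *ᵥ l) Aᵀ l, Matrix.vecMul_transpose,
      Matrix.mulVec_mulVec, hAAT, dotProduct_comm]
  have hw2' : (0:ℝ) ≤ ∑ i, (w i)^2 := by positivity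
  have hvar : l ⬝ᵥ (((2 * τ ^ 2 : ℝ) • D⁻¹) *ᵥ l) = (∑ i, (w i)^2) * τ^2 := by
    have h2 : ((2 * τ ^ 2 : ℝ) • D⁻¹) = (τ^2 : ℝ) • (((2:ℝ) • D⁻¹)) := by
      rw [smul_smul]
      ring_nf
    rw [h2, Matrix.smul_mulVec, dotProduct_smul, ← hw2, smul_eq_mul, mul_comm]
  have hcomp1 : (fun x : Fin d → ℝ => l ⬝ᵥ x) ∘ (fun y : Fin n → ℝ => β + A *ᵥ y)
      = fun y : Fin n → ℝ => l ⬝ᵥ β + w ⬝ᵥ y := by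
    funext y
    simp only [Function.comp_apply]
    rw [dotProduct_add, Matrix.dotProduct_mulVec, ← Matrix.mulVec_transpose, ← hwdef]
  rw [hfun, show (fun ω => β + A *ᵥ ε ω) = (fun y : Fin n → ℝ => β + A *ᵥ y) ∘ ε from rfl,
    ← Measure.map_map hAmeas hε, hεlaw,
    Measure.map_map (measurable_dotProduct_aux l) hAmeas, hcomp1,
    show (fun y : Fin n → ℝ => l ⬝ᵥ β + w ⬝ᵥ y)
      = ((l ⬝ᵥ β) + ·) ∘ (fun y : Fin n → ℝ => w ⬝ᵥ y) from rfl,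
    ← Measure.map_map (measurable_const_add _) (measurable_dotProduct_aux w)]
  erw [map_dotProduct_pi_gaussian]
  rw [gaussianReal_map_const_add, zero_add]
  congr 1
  have hτ2 : ((τ^2).toNNReal : NNReal) = (⟨τ ^ 2, sq_nonneg τ⟩ : NNReal) := by
    ext
    simp [Real.coe_toNNReal', max_eq_left (sq_nonneg τ)]
    rfl
  rw [hvar, Real.toNNReal_mul hw2', hτ2]
end
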